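/- For $t\in(-1,1)$ let $\rho=\rho(t)=\sqrt{1+t^2}$, $y(t)=(2-\rho)^{-2/3}(1+\rho)^{-1/3}$, $x(t)=t\,y(t)$, and define the curvature $\kappa(t)=\dfrac{x'(t)\,y''(t)-y'(t)\,x''(t)}{\big(x'(t)^2+y'(t)^2\big)^{3/2}}$. Then for every $t\in(-1,1)$, $\kappa(t)=\dfrac{(2-\rho)^{5/3}\,(1+\rho)^{5/6}}{2^{3/2}\,\rho^{5/2}}$, and in particular $\kappa(t)>0$. -/

import Mathlib

open Set

noncomputable def ρ (t : ℝ) : ℝ := Real.sqrt (1 + t ^ 2)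

noncomputable def yfun (t : ℝ) : ℝ :=
  (2 - ρ t) ^ (-(2 : ℝ) / 3) * (1 + ρ t) ^ (-(1 : ℝ) / 3)

noncomputable def xfun (t : ℝ) : ℝ := t * yfun t

noncomputable def κfun (t : ℝ) : ℝ :=
  (deriv xfun t * deriv (deriv yfun) t - deriv yfun t * deriv (deriv xfun) t) /
    ((deriv xfun t) ^ 2 + (deriv yfun t) ^ 2) ^ ((3 : ℝ) / 2)

lemma rho_pos (t : ℝ) : 0 < ρ t := Real.sqrt_pos.mpr (by positivity)

lemma rho_sq (t : ℝ) : ρ t ^ 2 = 1 + t ^ 2 := Real.sq_sqrt (by positivity)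

lemma rho_lt_two {t : ℝ} (ht : t ∈ Ioo (-1 : ℝ) 1) : ρ t < 2 := by
  obtain ⟨h1, h2⟩ := ht
  have hsq : ρ t ^ 2 < 2 ^ 2 := by rw [rho_sq]; nlinarith
  nlinarith [rho_pos t]

lemma hasDerivAt_rho (t : ℝ) : HasDerivAt ρ (t / ρ t) t := by
  have h1 : HasDerivAt (fun s : ℝ => 1 + s ^ 2) (2 * t) t := by
    simpa using (hasDerivAt_pow 2 t).const_add 1
  have hne : (1 : ℝ) + t ^ 2 ≠ 0 := by positivity
  have h2 := (Real.hasDerivAt_sqrt hne).comp t h1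
  have hρ : Real.sqrt (1 + t ^ 2) ≠ 0 := (rho_pos t).ne'
  convert h2 using 1
  show t / Real.sqrt (1 + t ^ 2) = _
  field_simp
  all_goals rfl

noncomputable def Xd (t : ℝ) : ℝ := (2 - ρ t) ^ (-(5:ℝ)/3) * (1 + ρ t) ^ (-(1:ℝ)/3)
noncomputable def Yd (t : ℝ) : ℝ := t * ((2 - ρ t) ^ (-(5:ℝ)/3) * (1 + ρ t) ^ (-(4:ℝ)/3))
noncomputable def Xdd (t : ℝ) : ℝ :=
  (t / ρ t) * (1 + 2 * ρ t) * ((2 - ρ t) ^ (-(8:ℝ)/3) * (1 + ρ t) ^ (-(4:ℝ)/3))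
noncomputable def Ydd (t : ℝ) : ℝ :=
  (2 - ρ t) ^ (-(5:ℝ)/3) * (1 + ρ t) ^ (-(4:ℝ)/3) +
    (t ^ 2 / ρ t) * (3 * ρ t - 1) * ((2 - ρ t) ^ (-(8:ℝ)/3) * (1 + ρ t) ^ (-(7:ℝ)/3))

lemma pow_third {u : ℝ} (hu : 0 < u) (n : ℕ) :
    u ^ (-(n : ℝ) / 3) = (u ^ (-(1:ℝ)/3)) ^ n := by
  rw [← Real.rpow_natCast (u ^ (-(1:ℝ)/3)) n, ← Real.rpow_mul hu.le]
  congr 1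
  ring

lemma cube_eq {u : ℝ} (hu : 0 < u) : u * (u ^ (-(1:ℝ)/3)) ^ 3 = 1 := by
  rw [← pow_third hu 3]
  norm_num
  rw [Real.rpow_neg_one]
  exact mul_inv_cancel₀ hu.ne'

lemma hasDerivAt_yfun {t : ℝ} (h : ρ t < 2) : HasDerivAt yfun (Yd t) t := by
  have hr := rho_pos t
  have hu : (0:ℝ) < 2 - ρ t := by linarith
  have hv : (0:ℝ) < 1 + ρ t := by linarith
  have h1 : HasDerivAt (fun s => 2 - ρ s) (-(t / ρ t)) t := (hasDerivAt_rho t).const_sub 2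
  have h3 : HasDerivAt (fun s => 1 + ρ s) (t / ρ t) t := (hasDerivAt_rho t).const_add 1
  have h2 := h1.rpow_const (p := -(2:ℝ)/3) (Or.inl hu.ne')
  have h4 := h3.rpow_const (p := -(1:ℝ)/3) (Or.inl hv.ne')
  have h5 : HasDerivAt yfun
      (-(t / ρ t) * (-(2:ℝ)/3) * (2 - ρ t) ^ (-(2:ℝ)/3 - 1) * ((1 + ρ t) ^ (-(1:ℝ)/3)) +
        ((2 - ρ t) ^ (-(2:ℝ)/3)) * (t / ρ t * (-(1:ℝ)/3) * (1 + ρ t) ^ (-(1:ℝ)/3 - 1))) t :=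
    h2.mul h4
  convert h5 using 1
  unfold Yd
  rw [show (-(2:ℝ)/3 - 1) = -((5:ℕ):ℝ)/3 by norm_num,
      show (-(1:ℝ)/3 - 1) = -((4:ℕ):ℝ)/3 by norm_num,
      show (-(2:ℝ)/3) = -((2:ℕ):ℝ)/3 by norm_num,
      show (-(5:ℝ)/3) = -((5:ℕ):ℝ)/3 by norm_num,
      show (-(4:ℝ)/3) = -((4:ℕ):ℝ)/3 by norm_num,
      show (-(1:ℝ)/3) = -((1:ℕ):ℝ)/3 by norm_num]
  simp only [pow_third hu, pow_third hv]
  set P := (2 - ρ t) ^ (-(1:ℝ)/3) with hP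
  set Q := (1 + ρ t) ^ (-(1:ℝ)/3) with hQ
  have hP3 := cube_eq hu
  have hQ3 := cube_eq hv
  rw [← hP] at hP3
  rw [← hQ] at hQ3
  have hr2 := rho_sq t
  field_simp
  linear_combination (2*t*P^5*Q) * hQ3 - (t*P^2*Q^4) * hP3

lemma hasDerivAt_xfun {t : ℝ} (h : ρ t < 2) : HasDerivAt xfun (Xd t) t := by
  have hr := rho_pos t
  have hu : (0:ℝ) < 2 - ρ t := by linarith
  have hv : (0:ℝ) < 1 + ρ t := by linarith
  have h5 : HasDerivAt xfun (1 * yfun t + t * Yd t) t :=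
    (hasDerivAt_id t).mul (hasDerivAt_yfun h)
  convert h5 using 1
  unfold Xd Yd yfun
  rw [show (-(2:ℝ)/3) = -((2:ℕ):ℝ)/3 by norm_num,
      show (-(1:ℝ)/3) = -((1:ℕ):ℝ)/3 by norm_num,
      show (-(5:ℝ)/3) = -((5:ℕ):ℝ)/3 by norm_num,
      show (-(4:ℝ)/3) = -((4:ℕ):ℝ)/3 by norm_num]
  simp only [pow_third hu, pow_third hv]
  set P := (2 - ρ t) ^ (-(1:ℝ)/3) with hP
  set Q := (1 + ρ t) ^ (-(1:ℝ)/3) with hQ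
  have hP3 := cube_eq hu
  have hQ3 := cube_eq hv
  rw [← hP] at hP3
  rw [← hQ] at hQ3
  have hr2 := rho_sq t
  linear_combination (P^5*Q^4)*hr2 + (P^2*Q)*hP3 - ((ρ t - 1)*P^5*Q)*hQ3

lemma hasDerivAt_Xd {t : ℝ} (h : ρ t < 2) : HasDerivAt Xd (Xdd t) t := by
  have hr := rho_pos t
  have hu : (0:ℝ) < 2 - ρ t := by linarith
  have hv : (0:ℝ) < 1 + ρ t := by linarith
  have h1 : HasDerivAt (fun s => 2 - ρ s) (-(t / ρ t)) t := (hasDerivAt_rho t).const_sub 2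
  have h3 : HasDerivAt (fun s => 1 + ρ s) (t / ρ t) t := (hasDerivAt_rho t).const_add 1
  have h2 := h1.rpow_const (p := -(5:ℝ)/3) (Or.inl hu.ne')
  have h4 := h3.rpow_const (p := -(1:ℝ)/3) (Or.inl hv.ne')
  have h5 : HasDerivAt Xd
      (-(t / ρ t) * (-(5:ℝ)/3) * (2 - ρ t) ^ (-(5:ℝ)/3 - 1) * ((1 + ρ t) ^ (-(1:ℝ)/3)) +
        ((2 - ρ t) ^ (-(5:ℝ)/3)) * (t / ρ t * (-(1:ℝ)/3) * (1 + ρ t) ^ (-(1:ℝ)/3 - 1))) t :=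
    h2.mul h4
  convert h5 using 1
  unfold Xdd
  rw [show (-(5:ℝ)/3 - 1) = -((8:ℕ):ℝ)/3 by norm_num,
      show (-(1:ℝ)/3 - 1) = -((4:ℕ):ℝ)/3 by norm_num,
      show (-(5:ℝ)/3) = -((5:ℕ):ℝ)/3 by norm_num,
      show (-(8:ℝ)/3) = -((8:ℕ):ℝ)/3 by norm_num,
      show (-(4:ℝ)/3) = -((4:ℕ):ℝ)/3 by norm_num,
      show (-(1:ℝ)/3) = -((1:ℕ):ℝ)/3 by norm_num]
  simp only [pow_third hu, pow_third hv]
  set P := (2 - ρ t) ^ (-(1:ℝ)/3) with hP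
  set Q := (1 + ρ t) ^ (-(1:ℝ)/3) with hQ
  have hP3 := cube_eq hu
  have hQ3 := cube_eq hv
  rw [← hP] at hP3
  rw [← hQ] at hQ3
  have hr2 := rho_sq t
  field_simp
  linear_combination (5*t*P^8*Q) * hQ3 - (t*P^5*Q^4) * hP3

lemma hasDerivAt_Yd {t : ℝ} (h : ρ t < 2) : HasDerivAt Yd (Ydd t) t := by
  have hr := rho_pos t
  have hu : (0:ℝ) < 2 - ρ t := by linarith
  have hv : (0:ℝ) < 1 + ρ t := by linarith
  have h1 : HasDerivAt (fun s => 2 - ρ s) (-(t / ρ t)) t := (hasDerivAt_rho t).const_sub 2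
  have h3 : HasDerivAt (fun s => 1 + ρ s) (t / ρ t) t := (hasDerivAt_rho t).const_add 1
  have h2 := h1.rpow_const (p := -(5:ℝ)/3) (Or.inl hu.ne')
  have h4 := h3.rpow_const (p := -(4:ℝ)/3) (Or.inl hv.ne')
  have h6 := h2.mul h4
  have h5 : HasDerivAt Yd
      (1 * ((2 - ρ t) ^ (-(5:ℝ)/3) * (1 + ρ t) ^ (-(4:ℝ)/3)) +
        t * (-(t / ρ t) * (-(5:ℝ)/3) * (2 - ρ t) ^ (-(5:ℝ)/3 - 1) * ((1 + ρ t) ^ (-(4:ℝ)/3)) +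
          ((2 - ρ t) ^ (-(5:ℝ)/3)) * (t / ρ t * (-(4:ℝ)/3) * (1 + ρ t) ^ (-(4:ℝ)/3 - 1)))) t :=
    (hasDerivAt_id t).mul h6
  convert h5 using 1
  unfold Ydd
  rw [show (-(5:ℝ)/3 - 1) = -((8:ℕ):ℝ)/3 by norm_num,
      show (-(4:ℝ)/3 - 1) = -((7:ℕ):ℝ)/3 by norm_num,
      show (-(5:ℝ)/3) = -((5:ℕ):ℝ)/3 by norm_num,
      show (-(8:ℝ)/3) = -((8:ℕ):ℝ)/3 by norm_num,
      show (-(4:ℝ)/3) = -((4:ℕ):ℝ)/3 by norm_num,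
      show (-(7:ℝ)/3) = -((7:ℕ):ℝ)/3 by norm_num]
  simp only [pow_third hu, pow_third hv]
  set P := (2 - ρ t) ^ (-(1:ℝ)/3) with hP
  set Q := (1 + ρ t) ^ (-(1:ℝ)/3) with hQ
  have hP3 := cube_eq hu
  have hQ3 := cube_eq hv
  rw [← hP] at hP3
  rw [← hQ] at hQ3
  have hr2 := rho_sq t
  field_simp
  linear_combination (5*t^2*P^8*Q^4) * hQ3 - (4*t^2*P^5*Q^7) * hP3

/-- The curvature of the boundary parametrization, and its positivity. -/
theorem curvature_formula_and_pos :
    ∀ t ∈ Ioo (-1 : ℝ) 1,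
      κfun t =
        (2 - ρ t) ^ ((5 : ℝ) / 3) * (1 + ρ t) ^ ((5 : ℝ) / 6) /
          ((2 : ℝ) ^ ((3 : ℝ) / 2) * ρ t ^ ((5 : ℝ) / 2)) ∧
      0 < κfun t := by
  intro t ht
  have h2 := rho_lt_two ht
  have hr := rho_pos t
  have hu : (0:ℝ) < 2 - ρ t := by linarith
  have hv : (0:ℝ) < 1 + ρ t := by linarith
  have hmem : Ioo (-1:ℝ) 1 ∈ nhds t := Ioo_mem_nhds ht.1 ht.2
  have hdx : deriv xfun t = Xd t := (hasDerivAt_xfun h2).deriv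
  have hdy : deriv yfun t = Yd t := (hasDerivAt_yfun h2).deriv
  have hdxx : deriv (deriv xfun) t = Xdd t := by
    have he : deriv xfun =ᶠ[nhds t] Xd := by
      filter_upwards [hmem] with s hs
      exact (hasDerivAt_xfun (rho_lt_two hs)).deriv
    rw [he.deriv_eq]
    exact (hasDerivAt_Xd h2).deriv
  have hdyy : deriv (deriv yfun) t = Ydd t := by
    have he : deriv yfun =ᶠ[nhds t] Yd := by
      filter_upwards [hmem] with s hs
      exact (hasDerivAt_yfun (rho_lt_two hs)).deriv
    rw [he.deriv_eq]
    exact (hasDerivAt_Yd h2).deriv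
  have hnum : Xd t * Ydd t - Yd t * Xdd t =
      (2 - ρ t) ^ (-(10:ℝ)/3) * (1 + ρ t) ^ (-(5:ℝ)/3) / ρ t := by
    unfold Xd Yd Xdd Ydd
    rw [show (-(10:ℝ)/3) = -((10:ℕ):ℝ)/3 by norm_num,
        show (-(5:ℝ)/3) = -((5:ℕ):ℝ)/3 by norm_num,
        show (-(1:ℝ)/3) = -((1:ℕ):ℝ)/3 by norm_num,
        show (-(4:ℝ)/3) = -((4:ℕ):ℝ)/3 by norm_num,
        show (-(8:ℝ)/3) = -((8:ℕ):ℝ)/3 by norm_num,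
        show (-(7:ℝ)/3) = -((7:ℕ):ℝ)/3 by norm_num]
    simp only [pow_third hu, pow_third hv]
    set P := (2 - ρ t) ^ (-(1:ℝ)/3) with hP
    set Q := (1 + ρ t) ^ (-(1:ℝ)/3) with hQ
    have hP3 := cube_eq hu
    have hQ3 := cube_eq hv
    rw [← hP] at hP3
    rw [← hQ] at hQ3
    have hr2 := rho_sq t
    field_simp
    linear_combination (P^10*Q^8)*hr2 - ((ρ t - 1)*P^10*Q^5)*hQ3 - (t^2*P^10*Q^8)*hP3
  have hden : Xd t ^ 2 + Yd t ^ 2 =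
      2 * ρ t * ((2 - ρ t) ^ (-(10:ℝ)/3) * (1 + ρ t) ^ (-(5:ℝ)/3)) := by
    unfold Xd Yd
    rw [show (-(10:ℝ)/3) = -((10:ℕ):ℝ)/3 by norm_num,
        show (-(5:ℝ)/3) = -((5:ℕ):ℝ)/3 by norm_num,
        show (-(1:ℝ)/3) = -((1:ℕ):ℝ)/3 by norm_num,
        show (-(4:ℝ)/3) = -((4:ℕ):ℝ)/3 by norm_num]
    simp only [pow_third hu, pow_third hv]
    set P := (2 - ρ t) ^ (-(1:ℝ)/3) with hP
    set Q := (1 + ρ t) ^ (-(1:ℝ)/3) with hQ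
    have hP3 := cube_eq hu
    have hQ3 := cube_eq hv
    rw [← hP] at hP3
    rw [← hQ] at hQ3
    have hr2 := rho_sq t
    linear_combination -(P^10*Q^8)*hr2 + (P^10*((ρ t - 1)*Q^5 - Q^2))*hQ3
  have hform : κfun t =
      (2 - ρ t) ^ ((5 : ℝ) / 3) * (1 + ρ t) ^ ((5 : ℝ) / 6) /
        ((2 : ℝ) ^ ((3 : ℝ) / 2) * ρ t ^ ((5 : ℝ) / 2)) := by
    unfold κfun
    rw [hdx, hdy, hdxx, hdyy, hnum, hden]
    have e1 : (2 - ρ t) ^ (-(10:ℝ)/3) = (2 - ρ t) ^ (-(5:ℝ)) * (2 - ρ t) ^ ((5:ℝ)/3) := by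
      rw [← Real.rpow_add hu]; norm_num
    have e2 : (1 + ρ t) ^ (-(5:ℝ)/3) = (1 + ρ t) ^ (-(5:ℝ)/2) * (1 + ρ t) ^ ((5:ℝ)/6) := by
      rw [← Real.rpow_add hv]; norm_num
    have e3 : ρ t ^ ((5:ℝ)/2) = ρ t ^ ((3:ℝ)/2) * ρ t := by
      rw [show (5:ℝ)/2 = 3/2 + 1 by norm_num, Real.rpow_add hr, Real.rpow_one]
    have hW : (2 * ρ t * ((2 - ρ t) ^ (-(10:ℝ)/3) * (1 + ρ t) ^ (-(5:ℝ)/3))) ^ ((3:ℝ)/2)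
        = 2 ^ ((3:ℝ)/2) * ρ t ^ ((3:ℝ)/2) *
          ((2 - ρ t) ^ (-(5:ℝ)) * (1 + ρ t) ^ (-(5:ℝ)/2)) := by
      rw [Real.mul_rpow (by positivity) (by positivity),
          Real.mul_rpow (by positivity) (by positivity),
          Real.mul_rpow (by positivity) (by positivity),
          ← Real.rpow_mul hu.le, ← Real.rpow_mul hv.le]
      norm_num
    rw [hW, e1, e2, e3]
    have n1 := (Real.rpow_pos_of_pos hu (-(5:ℝ))).ne'
    have n2 := (Real.rpow_pos_of_pos hv (-(5:ℝ)/2)).ne'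
    have n3 := (Real.rpow_pos_of_pos hr ((3:ℝ)/2)).ne'
    have n4 := (Real.rpow_pos_of_pos (show (0:ℝ) < 2 by norm_num) ((3:ℝ)/2)).ne'
    have n5 := (Real.rpow_pos_of_pos hu ((5:ℝ)/3)).ne'
    have n6 := (Real.rpow_pos_of_pos hv ((5:ℝ)/6)).ne'
    field_simp
  refine ⟨hform, ?_⟩
  rw [hform]
  have := Real.rpow_pos_of_pos hu ((5:ℝ)/3)
  have := Real.rpow_pos_of_pos hv ((5:ℝ)/6)
  have := Real.rpow_pos_of_pos (show (0:ℝ) < 2 by norm_num) ((3:ℝ)/2)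
  have := Real.rpow_pos_of_pos hr ((5:ℝ)/2)
  positivity
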